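/- Let S = ⟨n_1, ..., n_ν⟩ be a numerical semigroup that is not symmetric, and let d be a positive integer coprime to n_ν with d > 1. Then T = ⟨dn_1, ..., dn_{ν-1}, n_ν⟩ is not nearly Gorenstein. -/
import Mathlib


/-- A numerical semigroup: a subset of ℕ containing 0, closed under addition,
with finite complement. -/
def IsNumSgp (S : Set ℕ) : Prop :=
  0 ∈ S ∧ (∀ a ∈ S, ∀ b ∈ S, a + b ∈ S) ∧ (Sᶜ : Set ℕ).Finite

/-- An integer belongs to (the image in ℤ of) S. -/
def memZ (S : Set ℕ) (z : ℤ) : Prop := ∃ s ∈ S, (s : ℤ) = z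

/-- F is the Frobenius number of S: the largest natural number not in S. -/
def IsFrob (S : Set ℕ) (F : ℕ) : Prop := F ∉ S ∧ ∀ n, F < n → n ∈ S

/-- The set of pseudo-Frobenius numbers of S. -/
def PF (S : Set ℕ) : Set ℕ := {f | f ∉ S ∧ ∀ s ∈ S, s ≠ 0 → f + s ∈ S}

/-- n is a minimal generator of S. -/
def IsMinGen (S : Set ℕ) (n : ℕ) : Prop :=
  n ∈ S ∧ n ≠ 0 ∧ ¬∃ a ∈ S, ∃ b ∈ S, a ≠ 0 ∧ b ≠ 0 ∧ a + b = n

/-- S is almost symmetric (Nari): F - f ∈ PF(S) for every f ∈ PF(S). -/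
def AlmostSym (S : Set ℕ) (F : ℕ) : Prop :=
  ∀ f ∈ PF S, ∃ g ∈ PF S, (g : ℤ) = (F : ℤ) - (f : ℤ)

/-- S is symmetric: PF(S) = {F(S)} (vacuously true when S = ℕ). -/
def IsSym (S : Set ℕ) : Prop := ∀ F, IsFrob S F → PF S = {F}

/-- (f_1,...,f_ν) is an NG-vector for S with minimal generators n_1,...,n_ν. -/
def IsNGVector {ν : ℕ} (S : Set ℕ) (n f : Fin ν → ℕ) : Prop :=
  ∀ i, f i ∈ PF S ∧ ∀ g ∈ PF S, memZ S ((n i : ℤ) + (f i : ℤ) - (g : ℤ))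

/-- S is nearly Gorenstein (generator criterion): for each minimal generator m
there is f ∈ PF(S) with m + f - g ∈ S for all g ∈ PF(S). -/
def NearlyGGen (S : Set ℕ) : Prop :=
  ∀ m, IsMinGen S m → ∃ f ∈ PF S, ∀ g ∈ PF S, memZ S ((m : ℤ) + (f : ℤ) - (g : ℤ))

/-- The canonical ideal K(S) = {z ∈ ℤ : F - z ∉ S}. -/
def Kan (S : Set ℕ) (F : ℕ) : Set ℤ := {z | ¬ memZ S ((F : ℤ) - z)}

/-- The relative ideal (S - K(S)) = {z ∈ ℤ : z + K(S) ⊆ S}. -/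
def SmK (S : Set ℕ) (F : ℕ) : Set ℤ := {z | ∀ k ∈ Kan S F, memZ S (z + k)}

/-- S is nearly Gorenstein: M(S) ⊆ K(S) + (S - K(S)). -/
def NearlyG (S : Set ℕ) (F : ℕ) : Prop :=
  ∀ m ∈ S, m ≠ 0 → ∃ k ∈ Kan S F, ∃ x ∈ SmK S F, k + x = (m : ℤ)

theorem stmt13 (ν : ℕ) (hν : 0 < ν) (S : Set ℕ) (n : Fin ν → ℕ)
    (hS : IsNumSgp S) (hmono : StrictMono n)
    (hgen : S = {m : ℕ | ∃ c : Fin ν → ℕ, m = ∑ j, c j * n j})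
    (hmin : ∀ i, IsMinGen S (n i))
    (hns : ¬ IsSym S)
    (d : ℕ) (hd : 1 < d) (hcop : Nat.Coprime d (n ⟨ν - 1, by omega⟩)) :
    ¬ NearlyGGen {m : ℕ | ∃ c : Fin ν → ℕ,
        m = ∑ j, c j * (if (j : ℕ) = ν - 1 then n j else d * n j)} := by
  obtain ⟨e, rfl⟩ : ∃ e, d = e + 2 := ⟨d - 2, by omega⟩
  obtain ⟨h0S, haddS, hfinS⟩ := hS
  intro hNG
  set last : Fin ν := ⟨ν - 1, by omega⟩ with hlastdef
  set N : ℕ := n last with hNdef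
  have hNpos : 0 < N := Nat.pos_of_ne_zero (hmin last).2.1
  have hNS : N ∈ S := (hmin last).1
  have hcopN : Nat.Coprime (e + 2) N := hcop
  have hcopZ : IsCoprime ((e : ℤ) + 2) (N : ℤ) := by
    have := (Nat.isCoprime_iff_coprime (m := e + 2) (n := N)).mpr hcopN
    push_cast at this
    exact this
  set T : Set ℕ := {m : ℕ | ∃ c : Fin ν → ℕ,
      m = ∑ j, c j * (if (j : ℕ) = ν - 1 then n j else (e + 2) * n j)} with hTdef
  have memS_iff : ∀ s : ℕ, s ∈ S ↔ ∃ c : Fin ν → ℕ, s = ∑ j, c j * n j := by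
    intro s; rw [hgen]; exact Iff.rfl
  have hsmul : ∀ (k s : ℕ), s ∈ S → k * s ∈ S := by
    intro k s hs
    induction k with
    | zero => simpa using h0S
    | succ k ih =>
      have := haddS _ ih _ hs
      simpa [Nat.succ_mul] using this
  have hlastval : ((last : Fin ν) : ℕ) = ν - 1 := rfl
  have memT_iff : ∀ m : ℕ, m ∈ T ↔ ∃ s ∈ S, ∃ c : ℕ, m = (e + 2) * s + c * N := by
    intro m
    constructor
    · rintro ⟨c, rfl⟩
      refine ⟨∑ j, (if j = last then 0 else c j) * n j, (memS_iff _).2 ⟨_, rfl⟩, c last, ?_⟩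
      rw [Finset.mul_sum]
      have hpt : ∀ j : Fin ν, c j * (if (j : ℕ) = ν - 1 then n j else (e + 2) * n j)
          = (e + 2) * ((if j = last then 0 else c j) * n j)
            + (if j = last then c last * N else 0) := by
        intro j
        rcases eq_or_ne j last with hj | hj
        · subst hj
          simp [hlastval, ← hNdef]
        · have hv : (j : ℕ) ≠ ν - 1 := fun h => hj (Fin.ext h)
          simp only [hv, if_neg, hj, if_false, ite_false]
          ring
      rw [Finset.sum_congr rfl fun j _ => hpt j, Finset.sum_add_distrib]
      simp
    · rintro ⟨s, hs, c, rfl⟩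
      obtain ⟨b, rfl⟩ := (memS_iff s).1 hs
      refine ⟨fun j => if j = last then (e + 2) * b last + c else b j, ?_⟩
      rw [Finset.mul_sum]
      have hpt : ∀ j : Fin ν,
          (if j = last then (e + 2) * b last + c else b j)
            * (if (j : ℕ) = ν - 1 then n j else (e + 2) * n j)
          = (e + 2) * (b j * n j) + (if j = last then c * N else 0) := by
        intro j
        rcases eq_or_ne j last with hj | hj
        · subst hj
          simp only [hlastval, if_pos rfl, ite_true, ← hNdef]
          ring
        · have hv : (j : ℕ) ≠ ν - 1 := fun h => hj (Fin.ext h)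
          simp only [hv, hj, if_false, ite_false]
          ring
      rw [show (∑ j, (if j = last then (e + 2) * b last + c else b j)
            * (if (j : ℕ) = ν - 1 then n j else (e + 2) * n j))
          = ∑ j, ((e + 2) * (b j * n j) + (if j = last then c * N else 0)) from
          Finset.sum_congr rfl fun j _ => hpt j, Finset.sum_add_distrib]
      simp
  have memTof : ∀ w ∈ S, ∀ c : ℕ, (e + 2) * w + c * N ∈ T :=
    fun w hw c => (memT_iff _).2 ⟨w, hw, c, rfl⟩
  have notinT : ∀ w : ℕ, w ∉ S → ((e + 2) * w + (e + 1) * N) ∉ T := by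
    intro w hw hmem
    obtain ⟨s, hsS, c, heq⟩ := (memT_iff _).1 hmem
    have heqZ : ((e : ℤ) + 2) * w + ((e : ℤ) + 1) * N = ((e : ℤ) + 2) * s + (c : ℤ) * N := by
      exact_mod_cast heq
    have hdvd : ((e : ℤ) + 2) ∣ ((c : ℤ) - ((e : ℤ) + 1)) := by
      apply hcopZ.dvd_of_dvd_mul_right
      exact ⟨(w : ℤ) - s, by linear_combination -heqZ⟩
    obtain ⟨k, hk⟩ := hdvd
    have hk0 : 0 ≤ k := by
      by_contra h
      push_neg at h
      have h1 : k ≤ -1 := by omega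
      have h2 : ((e : ℤ) + 2) * k ≤ ((e : ℤ) + 2) * (-1) :=
        mul_le_mul_of_nonneg_left h1 (by positivity)
      have h3 : (0 : ℤ) ≤ c := Int.natCast_nonneg c
      have h4 : (0 : ℤ) ≤ e := Int.natCast_nonneg e
      linarith
    have hktZ : ((k.toNat : ℤ)) = k := Int.toNat_of_nonneg hk0
    have hwZ : ((w : ℤ)) = (s : ℤ) + (k.toNat : ℤ) * N := by
      rw [hktZ]
      have h2 : ((e : ℤ) + 2) * w = ((e : ℤ) + 2) * ((s : ℤ) + k * N) := by
        linear_combination heqZ + (N : ℤ) * hk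
      exact mul_left_cancel₀ (by positivity) h2
    have hwn : w = s + k.toNat * N := by exact_mod_cast hwZ
    exact hw (hwn ▸ haddS s hsS _ (hsmul k.toNat N hNS))
  have hPFT : ∀ g ∈ PF S, (e + 2) * g + (e + 1) * N ∈ PF T := by
    intro g hg
    refine ⟨notinT g hg.1, ?_⟩
    intro t htT htne
    obtain ⟨s, hsS, c, rfl⟩ := (memT_iff t).1 htT
    rcases Nat.eq_zero_or_pos s with hs0 | hs0
    · subst hs0
      have hc : c ≠ 0 := by
        intro h; subst h; simp at htne
      obtain ⟨c', rfl⟩ : ∃ c'', c = c'' + 1 := ⟨c - 1, by omega⟩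
      have heq : (e + 2) * g + (e + 1) * N + ((e + 2) * 0 + (c' + 1) * N)
          = (e + 2) * (g + N) + c' * N := by ring
      rw [heq]
      exact memTof _ (hg.2 N hNS hNpos.ne') _
    · have heq : (e + 2) * g + (e + 1) * N + ((e + 2) * s + c * N)
          = (e + 2) * (g + s) + (e + 1 + c) * N := by ring
      rw [heq]
      exact memTof _ (hg.2 s hsS hs0.ne') _
  -- Frobenius and a second pseudo-Frobenius element
  unfold IsSym at hns
  push_neg at hns
  obtain ⟨F, hF, hne⟩ := hns
  have hFPF : F ∈ PF S := ⟨hF.1, fun s hs hs0 => hF.2 _ (by omega)⟩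
  obtain ⟨g, hgPF, hgF⟩ : ∃ g ∈ PF S, g ≠ F := by
    by_contra h
    push_neg at h
    exact hne (Set.eq_singleton_iff_unique_mem.mpr ⟨hFPF, h⟩)
  -- N is a minimal generator of T
  have hNT : N ∈ T := (memT_iff N).2 ⟨0, h0S, 1, by ring⟩
  have hminT : IsMinGen T N := by
    refine ⟨hNT, hNpos.ne', ?_⟩
    rintro ⟨a, haT, b, hbT, ha0, hb0, hab⟩
    obtain ⟨s₁, hs₁, c₁, rfl⟩ := (memT_iff a).1 haT
    obtain ⟨s₂, hs₂, c₂, rfl⟩ := (memT_iff b).1 hbT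
    have hzero : ∀ s₁' c₁' s₂' c₂' : ℕ, s₁' ∈ S →
        (e + 2) * s₁' + c₁' * N + ((e + 2) * s₂' + c₂' * N) = N →
        (e + 2) * s₂' + c₂' * N ≠ 0 → c₁' = 0 := by
      intro s₁' c₁' s₂' c₂' _ hab' hb0'
      by_contra h
      have h1 : N ≤ c₁' * N := Nat.le_mul_of_pos_left N (Nat.pos_of_ne_zero h)
      have h2 : c₁' * N ≤ (e + 2) * s₁' + c₁' * N := Nat.le_add_left _ _
      have h3 : 0 < (e + 2) * s₂' + c₂' * N := Nat.pos_of_ne_zero hb0'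
      linarith
    have hc₁ : c₁ = 0 := hzero s₁ c₁ s₂ c₂ hs₁ hab hb0
    have hc₂ : c₂ = 0 := by
      refine hzero s₂ c₂ s₁ c₁ hs₂ ?_ ha0
      linarith
    subst hc₁; subst hc₂
    have hdvdN : (e + 2) ∣ N := ⟨s₁ + s₂, by rw [← hab]; ring⟩
    have : e + 2 = 1 := Nat.eq_one_of_dvd_one (hcopN ▸ Nat.dvd_gcd dvd_rfl hdvdN)
    omega
  obtain ⟨f', hf'PF, hall⟩ := hNG N hminT
  obtain ⟨hf'T, hf'cl⟩ := hf'PF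
  have hfN : ∃ s ∈ S, f' + N = (e + 2) * s := by
    have h1 : f' + N ∈ T := hf'cl N hNT hNpos.ne'
    obtain ⟨s, hsS, c, heq⟩ := (memT_iff _).1 h1
    rcases Nat.eq_zero_or_pos c with hc | hc
    · subst hc; exact ⟨s, hsS, by simpa using heq⟩
    · exfalso
      obtain ⟨c', rfl⟩ : ∃ c', c = c' + 1 := ⟨c - 1, by omega⟩
      have h2 : f' + N = ((e + 2) * s + c' * N) + N := by rw [heq]; ring
      exact hf'T ((memT_iff _).2 ⟨s, hsS, c', Nat.add_right_cancel h2⟩)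
  obtain ⟨s, hsS, hds⟩ := hfN
  have hdsZ : (f' : ℤ) + N = ((e : ℤ) + 2) * s := by exact_mod_cast hds
  have key : ∀ g' ∈ PF S, f' = (e + 2) * g' + (e + 1) * N := by
    intro g' hg'
    obtain ⟨t, htT, htz⟩ := hall ((e + 2) * g' + (e + 1) * N) (hPFT g' hg')
    obtain ⟨s₂, hs₂S, c₂, rfl⟩ := (memT_iff t).1 htT
    push_cast at htz
    have hdvd : ((e : ℤ) + 2) ∣ ((c₂ : ℤ) - 1) := by
      apply hcopZ.dvd_of_dvd_mul_right
      exact ⟨(s : ℤ) - g' - s₂ - N, by linear_combination htz + hdsZ⟩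
    obtain ⟨k, hk⟩ := hdvd
    have hk0 : 0 ≤ k := by
      by_contra h
      push_neg at h
      have h1 : k ≤ -1 := by omega
      have h2 : ((e : ℤ) + 2) * k ≤ ((e : ℤ) + 2) * (-1) :=
        mul_le_mul_of_nonneg_left h1 (by positivity)
      have h3 : (0 : ℤ) ≤ c₂ := Int.natCast_nonneg c₂
      have h4 : (0 : ℤ) ≤ e := Int.natCast_nonneg e
      linarith
    have hktZ : ((k.toNat : ℤ)) = k := Int.toNat_of_nonneg hk0
    set u : ℕ := s₂ + k.toNat * N with hu
    have huS : u ∈ S := haddS _ hs₂S _ (hsmul _ _ hNS)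
    have hfZ : (f' : ℤ) = ((e : ℤ) + 2) * ((g' : ℤ) + (u : ℤ)) + ((e : ℤ) + 1) * N := by
      have huZ : (u : ℤ) = (s₂ : ℤ) + k * N := by
        rw [hu]; push_cast; rw [hktZ]
      rw [huZ]
      linear_combination (N : ℤ) * hk - htz
    have hfNat : f' = (e + 2) * (g' + u) + (e + 1) * N := by exact_mod_cast hfZ
    rcases Nat.eq_zero_or_pos u with hu0 | hu0
    · rw [hu0] at hfNat
      simpa using hfNat
    · exact absurd ((memT_iff _).2 ⟨g' + u, hg'.2 u huS hu0.ne', e + 1, hfNat⟩) hf'T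
  have h1 := key g hgPF
  have h2 := key F hFPF
  exact hgF (Nat.eq_of_mul_eq_mul_left (by omega)
    (Nat.add_right_cancel (h1.symm.trans h2)))
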